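/- Let c > 0 and d ≥ 1 be given. Let (u,v) be a bounded classical solution of the system ∂u/∂t = Δu + (2c(1−u)+1)v − u, ∂v/∂t = Δv + (c(u−v)−2)v on [0,∞)×ℝ^d such that (u(0,x), v(0,x)) ∈ ℛ = {(u,v) ∈ ℝ² : 0 ≤ v ≤ u ≤ 1} for all x ∈ ℝ^d. Then (u(t,x), v(t,x)) ∈ ℛ for all t ≥ 0 and all x ∈ ℝ^d. -/

import Mathlib

open Set Topology Filter Function



lemma deriv_nonpos_of_nonneg_before (g : ℝ → ℝ) {t0 : ℝ} (ht0 : 0 < t0)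
    (hdiff : DifferentiableAt ℝ g t0) (hnn : ∀ t ∈ Set.Ico 0 t0, 0 ≤ g t)
    (h0 : g t0 = 0) : deriv g t0 ≤ 0 := by
  have hd := hdiff.hasDerivAt
  rw [hasDerivAt_iff_tendsto_slope] at hd
  have hmono : 𝓝[<] t0 ≤ 𝓝[≠] t0 := nhdsWithin_mono _ (fun x hx => ne_of_lt hx)
  refine le_of_tendsto (hd.mono_left hmono) ?_
  filter_upwards [Ioo_mem_nhdsLT_of_mem (show t0 ∈ Ioc 0 t0 from ⟨ht0, le_rfl⟩)] with t ht
  have h1 : 0 ≤ g t := hnn t ⟨le_of_lt ht.1, ht.2⟩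
  have h2 : t - t0 < 0 := by linarith [ht.2]
  simp only [slope_def_field, h0, sub_zero]
  rw [div_nonpos_iff]
  left
  exact ⟨h1, h2.le⟩

lemma second_deriv_nonneg_of_isLocalMin (f : ℝ → ℝ) (hf : ContDiff ℝ 2 f) {y : ℝ}
    (hmin : IsLocalMin f y) : 0 ≤ deriv (deriv f) y := by
  have hf' : ContDiff ℝ 1 (deriv f) := by
    have h2 : ContDiff ℝ (1+1 : ℕ) f := by norm_num; exact hf
    exact (contDiff_succ_iff_deriv.mp h2).2.2
  by_contra hneg
  push_neg at hneg
  have hd1 : deriv f y = 0 := hmin.deriv_eq_zero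
  have hd := ((hf'.differentiable one_ne_zero) y).hasDerivAt
  rw [hasDerivAt_iff_tendsto_slope] at hd
  have hmono : 𝓝[>] y ≤ 𝓝[≠] y := nhdsWithin_mono _ (fun x hx => ne_of_gt hx)
  have hev : ∀ᶠ t in 𝓝[>] y, deriv f t < 0 := by
    have hto := hd.mono_left hmono
    have hlt : ∀ᶠ t in 𝓝[>] y, slope (deriv f) y t < 0 :=
      hto.eventually (eventually_lt_nhds hneg)
    filter_upwards [hlt, self_mem_nhdsWithin] with t ht1 ht2
    have hsl : (deriv f t - deriv f y) / (t - y) < 0 := by simpa [slope_def_field] using ht1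
    rw [hd1, sub_zero] at hsl
    have hty : 0 < t - y := by simp only [mem_Ioi] at ht2; linarith
    rcases div_neg_iff.mp hsl with ⟨h, h'⟩ | ⟨h, h'⟩
    · linarith
    · exact h
  obtain ⟨b, hby, hsub⟩ := mem_nhdsGT_iff_exists_Ioo_subset.mp hev
  have hcont : ContinuousOn f (Icc y b) := hf.continuous.continuousOn
  have hanti : StrictAntiOn f (Icc y b) := by
    apply strictAntiOn_of_deriv_neg (convex_Icc y b) hcont
    intro t ht
    rw [interior_Icc] at ht
    exact hsub ht
  obtain ⟨δ, hδ, hball⟩ := Metric.eventually_nhds_iff.mp hmin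
  have hby' : y < b := hby
  set t := min b (y + δ/2) with htdef
  have hyt : y < t := lt_min hby' (by linarith)
  have htb : t ≤ b := min_le_left _ _
  have h1 : f t < f y := hanti ⟨le_rfl, hby'.le⟩ ⟨hyt.le, htb⟩ hyt
  have h2 : f y ≤ f t := by
    apply hball
    rw [Real.dist_eq, abs_lt]
    have h3 := min_le_right b (y + δ/2)
    exact ⟨by linarith, by linarith⟩
  linarith
lemma contDiff_deriv_of_two (f : ℝ → ℝ) (hf : ContDiff ℝ 2 f) : ContDiff ℝ 1 (deriv f) := by
  have h2 : ContDiff ℝ (1+1 : ℕ) f := by norm_num; exact hf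
  exact (contDiff_succ_iff_deriv.mp h2).2.2

lemma diff_of_two (f : ℝ → ℝ) (hf : ContDiff ℝ 2 f) : Differentiable ℝ f :=
  hf.differentiable (by norm_num)

lemma hasDerivAt_quad (a k s : ℝ) : HasDerivAt (fun s => a + k * s ^ 2) (2 * k * s) s := by
  have h := ((hasDerivAt_pow 2 s).const_mul k).const_add a
  simpa [mul_comm, mul_assoc, mul_left_comm] using h

lemma deriv_deriv_add_quad (f : ℝ → ℝ) (hf : ContDiff ℝ 2 f) (a k y : ℝ) :
    deriv (deriv (fun s => f s + (a + k * s ^ 2))) y = deriv (deriv f) y + 2 * k := by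
  have h1 : deriv (fun s => f s + (a + k * s ^ 2)) = fun s => deriv f s + 2 * k * s :=
    funext fun s => by
      rw [deriv_fun_add (diff_of_two f hf s) (hasDerivAt_quad a k s).differentiableAt,
        (hasDerivAt_quad a k s).deriv]
  rw [h1]
  have h2 : HasDerivAt (fun s => 2 * k * s) (2 * k) y := by
    simpa using (hasDerivAt_id y).const_mul (2 * k)
  rw [deriv_fun_add ((contDiff_deriv_of_two f hf).differentiable one_ne_zero y) h2.differentiableAt,
    h2.deriv]

lemma deriv2_ge_of_min_quad (f : ℝ → ℝ) (hf : ContDiff ℝ 2 f) (a k y : ℝ)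
    (hmin : ∀ s, f y + (a + k * y ^ 2) ≤ f s + (a + k * s ^ 2)) :
    -(2 * k) ≤ deriv (deriv f) y := by
  have hlm : IsLocalMin (fun s => f s + (a + k * s ^ 2)) y :=
    Filter.Eventually.of_forall hmin
  have hC : ContDiff ℝ 2 (fun s => f s + (a + k * s ^ 2)) := by
    apply hf.add
    exact contDiff_const.add (contDiff_const.mul (contDiff_id.pow 2))
  have := second_deriv_nonneg_of_isLocalMin _ hC hlm
  rw [deriv_deriv_add_quad f hf a k y] at this
  linarith

lemma deriv_deriv_sub (f g : ℝ → ℝ) (hf : ContDiff ℝ 2 f) (hg : ContDiff ℝ 2 g) (y : ℝ) :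
    deriv (deriv (fun s => f s - g s)) y = deriv (deriv f) y - deriv (deriv g) y := by
  have h1 : deriv (fun s => f s - g s) = fun s => deriv f s - deriv g s :=
    funext fun s => deriv_sub (diff_of_two f hf s) (diff_of_two g hg s)
  rw [h1, deriv_fun_sub ((contDiff_deriv_of_two f hf).differentiable one_ne_zero y)
    ((contDiff_deriv_of_two g hg).differentiable one_ne_zero y)]

lemma itd2_eq (g : ℝ → ℝ) : iteratedDeriv 2 g = deriv (deriv g) := by
  rw [show (2:ℕ) = 1 + 1 from rfl, iteratedDeriv_succ, iteratedDeriv_one]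

lemma sum_update_sq (d : ℕ) (x0 : Fin d → ℝ) (i : Fin d) (s : ℝ) :
    ∑ j, (update x0 i s j) ^ 2 = s ^ 2 + ∑ j ∈ (Finset.univ \ {i}), (x0 j) ^ 2 := by
  have h : ∀ j, (update x0 i s j) ^ 2 = update (fun k => (x0 k) ^ 2) i (s ^ 2) j :=
    fun j => (Function.apply_update (fun _ r => r ^ 2) x0 i s j)
  have h2 : ∑ j, (update x0 i s j) ^ 2 = ∑ j, update (fun k => (x0 k) ^ 2) i (s ^ 2) j :=
    Finset.sum_congr rfl fun j _ => h j
  rw [h2, Finset.sum_update_of_mem (Finset.mem_univ i) (fun k => (x0 k) ^ 2) (s ^ 2)]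

lemma lapl_ge (d : ℕ) (w : (Fin d → ℝ) → ℝ) (hw : ContDiff ℝ 2 w) (e : ℝ)
    (x0 : Fin d → ℝ)
    (hpos : ∀ x, 0 ≤ w x + e * (1 + ∑ i, x i ^ 2))
    (h0 : w x0 + e * (1 + ∑ i, x0 i ^ 2) = 0) :
    -(2 * d * e) ≤ ∑ i, deriv (deriv fun s => w (update x0 i s)) (x0 i) := by
  have key : ∀ i : Fin d, -(2 * e) ≤ deriv (deriv fun s => w (update x0 i s)) (x0 i) := by
    intro i
    set a : ℝ := e * (1 + ∑ j ∈ (Finset.univ \ {i}), (x0 j) ^ 2) with ha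
    have hfs : ∀ s, (fun s => w (update x0 i s)) s + (a + e * s ^ 2)
        = w (update x0 i s) + e * (1 + ∑ j, (update x0 i s j) ^ 2) := by
      intro s
      rw [sum_update_sq]
      ring
    refine deriv2_ge_of_min_quad (fun s => w (update x0 i s)) ?_ a e (x0 i) ?_
    · exact hw.comp (contDiff_update 2 x0 i)
    intro s
    rw [hfs, hfs, update_eq_self, h0]
    exact hpos _
  calc -(2 * d * e) = ∑ _i : Fin d, -(2*e) := by
        simp [Finset.sum_const, Finset.card_univ]; ring
    _ ≤ _ := Finset.sum_le_sum fun i _ => key i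

lemma lapl_eq {d : ℕ} (u : ℝ → (Fin d → ℝ) → ℝ) (t : ℝ) (x : Fin d → ℝ) :
    (∑ i, iteratedDeriv 2 (fun s => u t (Function.update x i s)) (x i))
      = ∑ i, deriv (deriv fun s => u t (Function.update x i s)) (x i) := by
  simp only [itd2_eq]

set_option maxHeartbeats 1000000


/-- Pointwise time derivative of `u : ℝ → (Fin d → ℝ) → ℝ`. -/
noncomputable def timeDeriv {d : ℕ} (u : ℝ → (Fin d → ℝ) → ℝ) (t : ℝ) (x : Fin d → ℝ) : ℝ :=
  deriv (fun τ => u τ x) t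

/-- Pointwise spatial Laplacian `Δu = ∑ i ∂²u/∂xᵢ²`. -/
noncomputable def lapl {d : ℕ} (u : ℝ → (Fin d → ℝ) → ℝ) (t : ℝ) (x : Fin d → ℝ) : ℝ :=
  ∑ i : Fin d, iteratedDeriv 2 (fun s => u t (Function.update x i s)) (x i)

/-- A bounded classical solution on `[0,∞) × ℝ^d` of the system
`∂u/∂t = Δu + (2c(1−u)+1)v − u`, `∂v/∂t = Δv + (c(u−v)−2)v`:
both functions are bounded, continuous on `[0,∞) × ℝ^d`, C¹ in `t` and C² in `x`
for `t > 0`, and satisfy the system pointwise for `t > 0`. -/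
structure IsBddClassicalSol (d : ℕ) (c : ℝ) (u v : ℝ → (Fin d → ℝ) → ℝ) : Prop where
  bdd_u : ∃ C, ∀ t x, |u t x| ≤ C
  bdd_v : ∃ C, ∀ t x, |v t x| ≤ C
  cont_u : ContinuousOn (fun p : ℝ × (Fin d → ℝ) => u p.1 p.2) (Ici 0 ×ˢ univ)
  cont_v : ContinuousOn (fun p : ℝ × (Fin d → ℝ) => v p.1 p.2) (Ici 0 ×ˢ univ)
  t_reg_u : ∀ x, ContDiffOn ℝ 1 (fun τ => u τ x) (Ioi 0)
  t_reg_v : ∀ x, ContDiffOn ℝ 1 (fun τ => v τ x) (Ioi 0)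
  x_reg_u : ∀ t, 0 < t → ContDiff ℝ 2 (fun x => u t x)
  x_reg_v : ∀ t, 0 < t → ContDiff ℝ 2 (fun x => v t x)
  eq_u : ∀ t, 0 < t → ∀ x,
    timeDeriv u t x = lapl u t x + (2 * c * (1 - u t x) + 1) * v t x - u t x
  eq_v : ∀ t, 0 < t → ∀ x,
    timeDeriv v t x = lapl v t x + (c * (u t x - v t x) - 2) * v t x

/-- If a bounded classical solution of the system starts in
`ℛ = {(u,v) : 0 ≤ v ≤ u ≤ 1}`, it stays in `ℛ` for all `t ≥ 0`. -/
theorem stmt1 (d : ℕ) (hd : 1 ≤ d) (c : ℝ) (hc : 0 < c)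
    (u v : ℝ → (Fin d → ℝ) → ℝ)
    (hsol : IsBddClassicalSol d c u v)
    (hinit : ∀ x, 0 ≤ v 0 x ∧ v 0 x ≤ u 0 x ∧ u 0 x ≤ 1) :
    ∀ t, 0 ≤ t → ∀ x, 0 ≤ v t x ∧ v t x ≤ u t x ∧ u t x ≤ 1 := by
  obtain ⟨Cu, hCu⟩ := hsol.bdd_u
  obtain ⟨Cv, hCv⟩ := hsol.bdd_v
  set M : ℝ := max Cu Cv + 1 with hMdef
  have hM1 : 1 ≤ M := by
    have h1 : (0:ℝ) ≤ Cu := le_trans (abs_nonneg _) (hCu 0 0)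
    have := le_max_left Cu Cv; simp only [hMdef]; linarith
  have hMu : ∀ t x, |u t x| ≤ M := fun t x =>
    le_trans (hCu t x) (by simp only [hMdef]; linarith [le_max_left Cu Cv])
  have hMv : ∀ t x, |v t x| ≤ M := fun t x =>
    le_trans (hCv t x) (by simp only [hMdef]; linarith [le_max_right Cu Cv])
  set lam : ℝ := 2 * d + 8 * c * M + 4 * c + 10 with hlamdef
  have hlam0 : 0 < lam := by
    have : (0:ℝ) ≤ d := Nat.cast_nonneg d
    simp only [hlamdef]; nlinarith
  -- the key positivity lemma on strips
  have key : ∀ T : ℝ, 0 < T → ∀ ε : ℝ, 0 < ε → ∀ t ∈ Icc (0:ℝ) T, ∀ x : Fin d → ℝ,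
      0 < v t x + ε * Real.exp (lam * t) * (1 + ∑ i, x i ^ 2) ∧
      0 < u t x - v t x + ε * Real.exp (lam * t) * (1 + ∑ i, x i ^ 2) ∧
      0 < 1 - u t x + ε * Real.exp (lam * t) * (1 + ∑ i, x i ^ 2) := by
    intro T hT ε hε
    set φf : ℝ → (Fin d → ℝ) → ℝ :=
      fun t x => ε * Real.exp (lam * t) * (1 + ∑ i, x i ^ 2) with hφf
    set F : ℝ × (Fin d → ℝ) → ℝ := fun p =>
      min (v p.1 p.2 + φf p.1 p.2)
        (min (u p.1 p.2 - v p.1 p.2 + φf p.1 p.2) (1 - u p.1 p.2 + φf p.1 p.2)) with hFdef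
    suffices hsuff : ∀ t ∈ Icc (0:ℝ) T, ∀ x, 0 < F (t, x) by
      intro t htT x
      have h := hsuff t htT x
      simp only [hFdef, lt_min_iff] at h
      exact ⟨h.1, h.2.1, h.2.2⟩
    by_contra hcon
    push_neg at hcon
    obtain ⟨t1, ht1, x1, hFle⟩ := hcon
    set R : ℝ := (2*M+1)/ε + 1 with hRdef
    have hsumnn : ∀ x : Fin d → ℝ, 0 ≤ ∑ i, x i ^ 2 :=
      fun x => Finset.sum_nonneg fun i _ => sq_nonneg _
    have hφpos : ∀ t (x : Fin d → ℝ), 0 < φf t x := by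
      intro t x
      simp only [hφf]
      have h1 := hsumnn x
      have h2 := Real.exp_pos (lam * t)
      have h3 : (0:ℝ) < 1 + ∑ i, x i ^ 2 := by linarith
      positivity
    have hcomp_lb : ∀ t (x : Fin d → ℝ),
        -(2*M+1) ≤ v t x ∧ -(2*M+1) ≤ u t x - v t x ∧ -(2*M+1) ≤ 1 - u t x := by
      intro t x
      have h1 := abs_le.mp (hMu t x)
      have h2 := abs_le.mp (hMv t x)
      exact ⟨by linarith, by linarith, by linarith⟩
    have hbound : ∀ t (x : Fin d → ℝ), 0 ≤ t → F (t,x) ≤ 0 →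
        x ∈ Metric.closedBall (0 : Fin d → ℝ) R := by
      intro t x ht hF
      have hφle : φf t x ≤ 2*M+1 := by
        simp only [hFdef] at hF
        rcases min_le_iff.mp hF with h | h
        · linarith [(hcomp_lb t x).1]
        · rcases min_le_iff.mp h with h' | h'
          · linarith [(hcomp_lb t x).2.1]
          · linarith [(hcomp_lb t x).2.2]
      have hexp1 : 1 ≤ Real.exp (lam * t) := Real.one_le_exp (mul_nonneg hlam0.le ht)
      have hsum : ∑ i, x i ^ 2 ≤ (2*M+1)/ε := by
        rw [le_div_iff₀ hε]
        simp only [hφf] at hφle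
        nlinarith [hsumnn x]
      rw [Metric.mem_closedBall, dist_zero_right]
      have hR0 : 0 ≤ R := by
        have : 0 ≤ (2*M+1)/ε := div_nonneg (by linarith) hε.le
        simp only [hRdef]; linarith
      refine (pi_norm_le_iff_of_nonneg hR0).mpr fun i => ?_
      have h1 : x i ^ 2 ≤ (2*M+1)/ε :=
        le_trans (Finset.single_le_sum (fun j _ => sq_nonneg (x j)) (Finset.mem_univ i)) hsum
      rw [Real.norm_eq_abs]
      simp only [hRdef]
      nlinarith [abs_nonneg (x i), sq_abs (x i)]
    set K : Set (ℝ × (Fin d → ℝ)) := Icc (0:ℝ) T ×ˢ Metric.closedBall 0 R with hKdef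
    have hKc : IsCompact K := isCompact_Icc.prod (isCompact_closedBall _ _)
    have hφcont : Continuous (fun p : ℝ × (Fin d → ℝ) => φf p.1 p.2) := by
      simp only [hφf]
      exact (continuous_const.mul
        (Real.continuous_exp.comp (continuous_const.mul continuous_fst))).mul
        (continuous_const.add
          (continuous_finset_sum _ fun i _ => ((continuous_apply i).comp continuous_snd).pow 2))
    have hFcont : ContinuousOn F (Ici 0 ×ˢ univ) := by
      simp only [hFdef]
      exact (hsol.cont_v.add hφcont.continuousOn).inf
        (((hsol.cont_u.sub hsol.cont_v).add hφcont.continuousOn).inf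
          ((continuousOn_const.sub hsol.cont_u).add hφcont.continuousOn))
    have hKS : K ⊆ Ici 0 ×ˢ univ := prod_mono Icc_subset_Ici_self (subset_univ _)
    set Z : Set (ℝ × (Fin d → ℝ)) := K ∩ F ⁻¹' (Iic 0) with hZdef
    have hmemZ : ∀ t x, t ∈ Icc (0:ℝ) T → F (t,x) ≤ 0 → (t,x) ∈ Z :=
      fun t x htT hF => ⟨⟨htT, hbound t x htT.1 hF⟩, hF⟩
    have hZcl : IsClosed Z :=
      (hFcont.mono hKS).preimage_isClosed_of_isClosed hKc.isClosed isClosed_Iic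
    have hZcomp : IsCompact Z := hKc.of_isClosed_subset hZcl inter_subset_left
    have hZne : Z.Nonempty := ⟨(t1,x1), hmemZ t1 x1 ht1 hFle⟩
    obtain ⟨⟨t0, x0⟩, hp0Z, hp0min⟩ := hZcomp.exists_isMinOn hZne continuous_fst.continuousOn
    have ht0T : t0 ∈ Icc (0:ℝ) T := hp0Z.1.1
    have hFp0 : F (t0, x0) ≤ 0 := hp0Z.2
    have hbefore : ∀ t (x : Fin d → ℝ), 0 ≤ t → t < t0 → 0 < F (t,x) := by
      intro t x h0 hlt
      by_contra hng
      push_neg at hng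
      have hmem := hmemZ t x ⟨h0, le_trans hlt.le ht0T.2⟩ hng
      have h := isMinOn_iff.mp hp0min _ hmem
      simp only at h
      linarith
    have ht0pos : 0 < t0 := by
      rcases eq_or_lt_of_le ht0T.1 with h | h
      · exfalso
        have h0 := hinit x0
        have hpos0 : 0 < F (0, x0) := by
          simp only [hFdef, lt_min_iff]
          refine ⟨?_, ?_, ?_⟩ <;> nlinarith [hφpos 0 x0, h0.1, h0.2.1, h0.2.2]
        rw [← h] at hFp0
        linarith
      · exact h
    have hat_t0 : ∀ x, 0 ≤ F (t0, x) := by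
      intro x
      have hCA : ContinuousAt F (t0, x) := by
        have hmemS : (Ioi (0:ℝ) ×ˢ (univ : Set (Fin d → ℝ))) ∈ 𝓝 ((t0, x) : ℝ × (Fin d → ℝ)) :=
          (isOpen_Ioi.prod isOpen_univ).mem_nhds (Set.mem_prod.mpr ⟨ht0pos, mem_univ x⟩)
        exact hFcont.continuousAt
          (mem_of_superset hmemS (prod_mono Ioi_subset_Ici_self (subset_univ _)))
      have htd : Tendsto (fun t => F (t, x)) (𝓝[<] t0) (𝓝 (F (t0, x))) := by
        have h3 : Continuous (fun t : ℝ => ((t, x) : ℝ × (Fin d → ℝ))) :=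
          continuous_id.prodMk continuous_const
        have h4 : Tendsto (fun t : ℝ => ((t, x) : ℝ × (Fin d → ℝ))) (𝓝 t0) (𝓝 (t0, x)) :=
          h3.continuousAt
        exact (hCA.tendsto.comp h4).mono_left nhdsWithin_le_nhds
      refine ge_of_tendsto htd ?_
      filter_upwards [Ioo_mem_nhdsLT_of_mem (show t0 ∈ Ioc 0 t0 from ⟨ht0pos, le_rfl⟩)]
        with s hs
      exact (hbefore s x hs.1.le hs.2).le
    -- setup at the touching point
    set C0 : ℝ := 1 + ∑ i, x0 i ^ 2 with hC0def
    set e : ℝ := ε * Real.exp (lam * t0) with hedef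
    have hC01 : (1:ℝ) ≤ C0 := by simp only [hC0def]; linarith [hsumnn x0]
    have hepos : 0 < e := by simp only [hedef]; positivity
    set φ0 : ℝ := e * C0 with hφ0def
    have hφ0pos : 0 < φ0 := mul_pos hepos (by linarith)
    have heφ : e ≤ φ0 := by nlinarith
    have hφf0 : φf t0 x0 = φ0 := by simp only [hφf, hφ0def, hedef, hC0def]
    have hcomp0 : ∀ x : Fin d → ℝ, 0 ≤ v t0 x + e * (1 + ∑ i, x i ^ 2) ∧
        0 ≤ u t0 x - v t0 x + e * (1 + ∑ i, x i ^ 2) ∧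
        0 ≤ 1 - u t0 x + e * (1 + ∑ i, x i ^ 2) := by
      intro x
      have h := hat_t0 x
      simp only [hFdef, le_min_iff, hφf, hedef] at h
      exact h
    have hA0 : 0 ≤ v t0 x0 + φ0 := by
      have h := (hcomp0 x0).1
      simpa only [← hC0def, ← hφ0def] using h
    have hB0 : 0 ≤ u t0 x0 - v t0 x0 + φ0 := by
      have h := (hcomp0 x0).2.1
      simpa only [← hC0def, ← hφ0def] using h
    have hE0 : 0 ≤ 1 - u t0 x0 + φ0 := by
      have h := (hcomp0 x0).2.2
      simpa only [← hC0def, ← hφ0def] using h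
    have hzero : v t0 x0 + φ0 = 0 ∨ u t0 x0 - v t0 x0 + φ0 = 0 ∨ 1 - u t0 x0 + φ0 = 0 := by
      have h0 : F (t0,x0) = 0 := le_antisymm hFp0 (hat_t0 x0)
      simp only [hFdef, hφf0] at h0
      rcases min_choice (v t0 x0 + φ0)
        (min (u t0 x0 - v t0 x0 + φ0) (1 - u t0 x0 + φ0)) with hch | hch
      · left; rw [hch] at h0; exact h0
      · rw [hch] at h0
        rcases min_choice (u t0 x0 - v t0 x0 + φ0) (1 - u t0 x0 + φ0) with hch2 | hch2
        · right; left; rw [hch2] at h0; exact h0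
        · right; right; rw [hch2] at h0; exact h0
    have hu' : DifferentiableAt ℝ (fun τ => u τ x0) t0 :=
      ((hsol.t_reg_u x0).contDiffAt (isOpen_Ioi.mem_nhds ht0pos)).differentiableAt one_ne_zero
    have hv' : DifferentiableAt ℝ (fun τ => v τ x0) t0 :=
      ((hsol.t_reg_v x0).contDiffAt (isOpen_Ioi.mem_nhds ht0pos)).differentiableAt one_ne_zero
    have hlamt : HasDerivAt (fun t : ℝ => lam * t) lam t0 := by
      simpa using (hasDerivAt_id t0).const_mul lam
    have hE : HasDerivAt (fun t => ε * Real.exp (lam * t) * C0)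
        (ε * (Real.exp (lam * t0) * lam) * C0) t0 :=
      ((hlamt.exp).const_mul ε).mul_const C0
    have hEd : DifferentiableAt ℝ (fun t => ε * Real.exp (lam * t) * C0) t0 :=
      hE.differentiableAt
    have hEval : ε * (Real.exp (lam * t0) * lam) * C0 = lam * φ0 := by
      simp only [hφ0def, hedef]; ring
    have hφslice : ∀ s : ℝ, φf s x0 = ε * Real.exp (lam * s) * C0 := fun s => by
      simp only [hφf, hC0def]
    have hcompge : ∀ t (x : Fin d → ℝ), 0 ≤ t → t < t0 →
        0 ≤ v t x + φf t x ∧ 0 ≤ u t x - v t x + φf t x ∧ 0 ≤ 1 - u t x + φf t x := by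
      intro t x h0 hlt
      have h := hbefore t x h0 hlt
      simp only [hFdef, lt_min_iff] at h
      exact ⟨h.1.le, h.2.1.le, h.2.2.le⟩
    have hUb := abs_le.mp (hMu t0 x0)
    have hVb := abs_le.mp (hMv t0 x0)
    have hdnn : (0:ℝ) ≤ (d:ℝ) := Nat.cast_nonneg d
    have hde : 2*(d:ℝ)*e ≤ 2*(d:ℝ)*φ0 := by nlinarith
    have heC : e * (1 + ∑ i, x0 i ^ 2) = φ0 := by simp only [hφ0def, hC0def]
    have hequ := hsol.eq_u t0 ht0pos x0
    have heqv := hsol.eq_v t0 ht0pos x0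
    rw [timeDeriv] at hequ heqv
    rcases hzero with hz | hz | hz
    · -- v touches 0
      have hveq : v t0 x0 = -φ0 := by linarith
      have htd : deriv (fun τ => v τ x0) t0 + lam * φ0 ≤ 0 := by
        have hgd : deriv (fun t => v t x0 + ε * Real.exp (lam * t) * C0) t0 ≤ 0 := by
          refine deriv_nonpos_of_nonneg_before _ ht0pos (hv'.add hEd) (fun s hs => ?_) ?_
          · have h := (hcompge s x0 hs.1 hs.2).1
            rw [hφslice s] at h
            exact h
          · rw [← hφslice t0, hφf0]; linarith
        rw [deriv_fun_add hv' hEd, hE.deriv, hEval] at hgd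
        exact hgd
      have hlapv : -(2*(d:ℝ)*e) ≤ lapl v t0 x0 := by
        have h := lapl_ge d (fun y => v t0 y) (hsol.x_reg_v t0 ht0pos) e x0
          (fun y => (hcomp0 y).1)
          (by show v t0 x0 + e * (1 + ∑ i, x0 i ^ 2) = 0; rw [heC]; linarith)
        simpa only [lapl, itd2_eq] using h
      have hr1 : c * (u t0 x0 - v t0 x0) - 2 ≤ 2*c*M + 2 := by nlinarith
      have hr2 : (c * (u t0 x0 - v t0 x0) - 2) * φ0 ≤ (2*c*M + 2) * φ0 :=
        mul_le_mul_of_nonneg_right hr1 hφ0pos.le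
      have hreac : (c * (u t0 x0 - v t0 x0) - 2) * v t0 x0
          = -((c * (u t0 x0 - v t0 x0) - 2) * φ0) := by rw [hveq]; ring
      have hgap : 0 < lam - (2*(d:ℝ) + 2*c*M + 2) := by
        simp only [hlamdef]; nlinarith
      linarith only [mul_pos hgap hφ0pos, htd, heqv, hr2, hreac, hlapv, hde]
    · -- u - v touches 0
      have hbeq : u t0 x0 - v t0 x0 = -φ0 := by linarith
      have htd : deriv (fun τ => u τ x0) t0 - deriv (fun τ => v τ x0) t0 + lam * φ0 ≤ 0 := by
        have hgd : deriv (fun t => u t x0 - v t x0 + ε * Real.exp (lam * t) * C0) t0 ≤ 0 := by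
          refine deriv_nonpos_of_nonneg_before _ ht0pos ((hu'.sub hv').add hEd)
            (fun s hs => ?_) ?_
          · have h := (hcompge s x0 hs.1 hs.2).2.1
            rw [hφslice s] at h
            exact h
          · rw [← hφslice t0, hφf0]; linarith
        rw [deriv_fun_add (f := fun t => u t x0 - v t x0) (hu'.sub hv') hEd, deriv_fun_sub hu' hv', hE.deriv, hEval] at hgd
        exact hgd
      have hlap : -(2*(d:ℝ)*e) ≤ lapl u t0 x0 - lapl v t0 x0 := by
        have h := lapl_ge d (fun y => u t0 y - v t0 y)
          ((hsol.x_reg_u t0 ht0pos).sub (hsol.x_reg_v t0 ht0pos)) e x0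
          (fun y => (hcomp0 y).2.1)
          (by show u t0 x0 - v t0 x0 + e * (1 + ∑ i, x0 i ^ 2) = 0; rw [heC]; linarith)
        have hsl : ∀ i : Fin d,
            deriv (deriv fun s => u t0 (update x0 i s) - v t0 (update x0 i s)) (x0 i)
            = deriv (deriv fun s => u t0 (update x0 i s)) (x0 i)
              - deriv (deriv fun s => v t0 (update x0 i s)) (x0 i) := fun i =>
          deriv_deriv_sub _ _ ((hsol.x_reg_u t0 ht0pos).comp (contDiff_update 2 x0 i))
            ((hsol.x_reg_v t0 ht0pos).comp (contDiff_update 2 x0 i)) (x0 i)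
        rw [Finset.sum_congr rfl (fun i _ => hsl i), Finset.sum_sub_distrib] at h
        simpa only [lapl, itd2_eq] using h
      have hφ2M : φ0 ≤ 2*M := by linarith
      have hA0' : -φ0 ≤ v t0 x0 := by linarith
      have hE0' : -φ0 ≤ 1 - u t0 x0 := by linarith
      set κ : ℝ := 2*c*(1 - u t0 x0) + 2 + c*φ0 with hκdef
      have hκv : -((2*c*(1+M) + 2 + 2*c*M + c*M) * φ0) ≤ κ * v t0 x0 := by
        have hcM : (0:ℝ) < c*M := mul_pos hc (by linarith)
        have hq1 : (0:ℝ) ≤ c*φ0 := (mul_pos hc hφ0pos).le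
        have hq2 : (0:ℝ) ≤ c*M*φ0 := (mul_pos hcM hφ0pos).le
        rcases le_or_gt 0 κ with hk | hk
        · have h1 : κ ≤ 2*c*(1+M) + 2 + 2*c*M := by
            have h5 := mul_le_mul_of_nonneg_left hUb.1 hc.le
            simp only [hκdef]
            linarith only [h5, hq1, hq2, hφ2M, mul_le_mul_of_nonneg_left hφ2M hc.le]
          have h2 := mul_le_mul_of_nonneg_left hA0' hk
          have h3 := mul_le_mul_of_nonneg_right h1 hφ0pos.le
          linarith only [h2, h3, hq1, hq2, hφ0pos.le]
        · have h2 : -(c*φ0) ≤ κ := by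
            have h5 := mul_le_mul_of_nonneg_left hE0' hc.le
            simp only [hκdef]
            linarith only [h5, hq1]
          have h3 := mul_le_mul_of_nonpos_left hVb.2 hk.le
          have h4 := mul_le_mul_of_nonneg_right h2 (by linarith : (0:ℝ) ≤ M)
          linarith only [h3, h4, hq1, hq2, hφ0pos.le]
      have hRalg : (2*c*(1 - u t0 x0) + 1) * v t0 x0 - u t0 x0
          - (c*(u t0 x0 - v t0 x0) - 2) * v t0 x0 = κ * v t0 x0 + φ0 := by
        simp only [hκdef]
        have h3 : u t0 x0 = v t0 x0 - φ0 := by linarith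
        rw [h3]
        ring
      have hgap : 0 < lam - (2*(d:ℝ) + (2*c*(1+M) + 2 + 2*c*M + c*M)) := by
        simp only [hlamdef]; nlinarith
      linarith only [mul_pos hgap hφ0pos, htd, hequ, heqv, hκv, hlap, hde, hRalg, hφ0pos]
    · -- 1 - u touches 0
      have heeq : u t0 x0 = 1 + φ0 := by linarith
      have htd : -(deriv (fun τ => u τ x0) t0) + lam * φ0 ≤ 0 := by
        have hgd : deriv (fun t => 1 - u t x0 + ε * Real.exp (lam * t) * C0) t0 ≤ 0 := by
          refine deriv_nonpos_of_nonneg_before _ ht0pos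
            (((differentiableAt_const 1).sub hu').add hEd) (fun s hs => ?_) ?_
          · have h := (hcompge s x0 hs.1 hs.2).2.2
            rw [hφslice s] at h
            exact h
          · rw [← hφslice t0, hφf0]; linarith
        rw [deriv_fun_add (f := fun t => 1 - u t x0) ((differentiableAt_const 1).sub hu') hEd,
          deriv_fun_sub (differentiableAt_const 1) hu', deriv_const, hE.deriv, hEval] at hgd
        linarith
      have hlapu : lapl u t0 x0 ≤ 2*(d:ℝ)*e := by
        have h := lapl_ge d (fun y => 1 - u t0 y)
          (contDiff_const.sub (hsol.x_reg_u t0 ht0pos)) e x0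
          (fun y => (hcomp0 y).2.2)
          (by show 1 - u t0 x0 + e * (1 + ∑ i, x0 i ^ 2) = 0; rw [heC]; linarith)
        have hsl : ∀ i : Fin d,
            deriv (deriv fun s => 1 - u t0 (update x0 i s)) (x0 i)
            = -(deriv (deriv fun s => u t0 (update x0 i s)) (x0 i)) := by
          intro i
          have h1 := deriv_deriv_sub (fun _ => (1:ℝ)) (fun s => u t0 (update x0 i s))
            contDiff_const ((hsol.x_reg_u t0 ht0pos).comp (contDiff_update 2 x0 i)) (x0 i)
          simpa using h1
        rw [Finset.sum_congr rfl (fun i _ => hsl i), Finset.sum_neg_distrib] at h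
        have h2 : (∑ i, deriv (deriv fun s => u t0 (update x0 i s)) (x0 i)) ≤ 2*(d:ℝ)*e := by
          linarith
        simpa only [lapl, itd2_eq] using h2
      have hA0' : -φ0 ≤ v t0 x0 := by linarith
      have hV2 : v t0 x0 ≤ 1 + 2*φ0 := by linarith
      have hφM1 : φ0 ≤ M + 1 := by linarith
      have h1u : 1 - u t0 x0 = -φ0 := by linarith
      have hrx : (2*c*(1 - u t0 x0) + 1) * v t0 x0 ≤ 1 + 2*φ0 + 2*c*(M+1)*φ0 := by
        rw [h1u]
        have hMnn : (0:ℝ) ≤ M + 1 := by linarith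
        have hq1 : (0:ℝ) ≤ c*φ0 := (mul_pos hc hφ0pos).le
        have hq2 : (0:ℝ) ≤ c*φ0*φ0 := by positivity
        have hq3 : (0:ℝ) ≤ c*(M+1)*φ0 := by positivity
        rcases le_or_gt 0 (1 - 2*c*φ0) with hk | hk
        · have h2 := mul_le_mul_of_nonneg_left hV2 hk
          have h3 : (1 - 2*c*φ0) * (1 + 2*φ0) ≤ 1 + 2*φ0 := by
            linarith only [hq1, hq2]
          linarith only [h2, h3, hq3]
        · have h2 := mul_le_mul_of_nonpos_left hA0' hk.le
          have h3 := mul_le_mul_of_nonneg_left hφM1 (by positivity : (0:ℝ) ≤ 2*c*φ0)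
          linarith only [h2, h3, hφ0pos.le]
      have hgap : 0 < lam - (2*(d:ℝ) + 2*c*M + 2*c + 1) := by
        simp only [hlamdef]; nlinarith
      linarith only [mul_pos hgap hφ0pos, htd, hequ, hlapu, hrx, hde, hφ0pos.le, heeq]


  -- conclude
  intro t ht x
  have hmain : ∀ w : ℝ, (∀ ε : ℝ, 0 < ε → 0 < w + ε * Real.exp (lam * t) * (1 + ∑ i, x i ^ 2))
      → 0 ≤ w := by
    intro w hw
    by_contra hneg
    push_neg at hneg
    set A := Real.exp (lam * t) * (1 + ∑ i, x i ^ 2) with hA'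
    have hApos : 0 < A := by positivity
    have hε : 0 < -w / (2 * A) := div_pos (by linarith) (by linarith)
    have h5 := hw _ hε
    have h6 : -w / (2 * A) * Real.exp (lam * t) * (1 + ∑ i, x i ^ 2) = -w / 2 := by
      rw [mul_assoc, ← hA']
      field_simp
    rw [h6] at h5
    linarith
  have h1 : 0 ≤ v t x := hmain _ fun ε hε =>
    (key (t+1) (by linarith) ε hε t ⟨ht, by linarith⟩ x).1
  have h2 : 0 ≤ u t x - v t x := hmain _ fun ε hε =>
    (key (t+1) (by linarith) ε hε t ⟨ht, by linarith⟩ x).2.1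
  have h3 : 0 ≤ 1 - u t x := hmain _ fun ε hε =>
    (key (t+1) (by linarith) ε hε t ⟨ht, by linarith⟩ x).2.2
  exact ⟨h1, by linarith, by linarith⟩
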